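/- Let y_1, …, y_{N−1} solve the periodic semi-discrete FtL system, let k ∈ ℝ, let j ∈ {1,…,N−1}, and let t > 0 be a time with y_j(t) ≠ k. Then the function s ↦ |y_j(s) − k| is differentiable at t and its derivative at t is at most (1/ℓ)[sgn(y_{j+1}(t) − k)(V(y_{j+1}(t)) − V(k)) − sgn(y_j(t) − k)(V(y_j(t)) − V(k))]. -/
import Mathlib


/-- `y j`, `j = 1, …, N-1`, solves the periodic semi-discrete Follow-the-Leader
system `ẏ_j(t) = (1/ℓ)(V(y_{j+1}(t)) − V(y_j(t)))` on `[0, ∞)`, with the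
periodic convention `y_N := y_1`. -/
def IsFtLSolution (N : ℕ) (ℓ : ℝ) (V : ℝ → ℝ) (y : ℕ → ℝ → ℝ) : Prop :=
  (∀ t : ℝ, y N t = y 1 t) ∧
  ∀ j ∈ Finset.Icc 1 (N - 1), ∀ t ∈ Set.Ici (0 : ℝ),
    HasDerivWithinAt (y j) (1 / ℓ * (V (y (j + 1) t) - V (y j t))) (Set.Ici (0 : ℝ)) t

/-- For monotone `V`, `sign(x-k)(V x - V k) = |V x - V k|`. -/
lemma sign_mul_eq_abs (V : ℝ → ℝ) (hV : Monotone V) (k x : ℝ) :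
    Real.sign (x - k) * (V x - V k) = |V x - V k| := by
  rcases lt_trichotomy x k with h | h | h
  · rw [Real.sign_of_neg (by linarith), abs_of_nonpos (by linarith [hV h.le])]; ring
  · simp [h]
  · rw [Real.sign_of_pos (by linarith), abs_of_nonneg (by linarith [hV h.le])]; ring

lemma abs_sign_le_one (r : ℝ) : |Real.sign r| ≤ 1 := by
  rcases lt_trichotomy r 0 with h | h | h
  · rw [Real.sign_of_neg h]; norm_num
  · simp [h, Real.sign_zero]
  · rw [Real.sign_of_pos h]; norm_num

lemma sign_mul_le_abs (r x : ℝ) : Real.sign r * x ≤ |x| :=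
  calc Real.sign r * x ≤ |Real.sign r * x| := le_abs_self _
    _ = |Real.sign r| * |x| := abs_mul _ _
    _ ≤ 1 * |x| := by
        exact mul_le_mul_of_nonneg_right (abs_sign_le_one r) (abs_nonneg x)
    _ = |x| := one_mul _

/-- If `y` solves the periodic semi-discrete FtL system, `k ∈ ℝ`,
`j ∈ {1,…,N−1}` and `t > 0` with `y_j(t) ≠ k`, then `s ↦ |y_j(s) − k|` is
differentiable at `t` with derivative at most
`(1/ℓ)[sgn(y_{j+1}(t) − k)(V(y_{j+1}(t)) − V(k)) − sgn(y_j(t) − k)(V(y_j(t)) − V(k))]`. -/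
theorem ftl_kruzkov_entropy_inequality
    (N : ℕ) (hN : 2 ≤ N) (ℓ : ℝ) (hℓ : 0 < ℓ)
    (V : ℝ → ℝ) (LV : NNReal) (hVlip : LipschitzWith LV V) (hVmono : Monotone V)
    (y : ℕ → ℝ → ℝ) (hy : IsFtLSolution N ℓ V y)
    (k : ℝ) (j : ℕ) (hj : j ∈ Finset.Icc 1 (N - 1))
    (t : ℝ) (ht : 0 < t) (hne : y j t ≠ k) :
    ∃ d : ℝ, HasDerivAt (fun s => |y j s - k|) d t ∧
      d ≤ 1 / ℓ * (Real.sign (y (j + 1) t - k) * (V (y (j + 1) t) - V k)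
            - Real.sign (y j t - k) * (V (y j t) - V k)) := by
  obtain ⟨hper, hode⟩ := hy
  have hd : HasDerivAt (y j) (1 / ℓ * (V (y (j + 1) t) - V (y j t))) t :=
    (hode j hj t ht.le).hasDerivAt (Ici_mem_nhds ht)
  set c : ℝ := Real.sign (y j t - k) with hc
  set A : ℝ := V (y (j + 1) t)
  set B : ℝ := V (y j t)
  set K : ℝ := V k
  have hcont : ContinuousAt (y j) t := hd.continuousAt
  have hd2 : HasDerivAt (fun s => c * (y j s - k)) (c * (1 / ℓ * (A - B))) t :=
    (hd.sub_const k).const_mul c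
  have heq : (fun s => |y j s - k|) =ᶠ[nhds t] fun s => c * (y j s - k) := by
    rcases hne.lt_or_gt with h | h
    · have hc' : c = -1 := Real.sign_of_neg (by linarith)
      have hev : ∀ᶠ s in nhds t, y j s < k := hcont.eventually_lt continuousAt_const h
      filter_upwards [hev] with s hs
      rw [hc', abs_of_neg (by linarith)]; ring
    · have hc' : c = 1 := Real.sign_of_pos (by linarith)
      have hev : ∀ᶠ s in nhds t, k < y j s := continuousAt_const.eventually_lt hcont h
      filter_upwards [hev] with s hs
      rw [hc', abs_of_pos (by linarith)]; ring
  refine ⟨c * (1 / ℓ * (A - B)), hd2.congr_of_eventuallyEq heq, ?_⟩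
  have h1 : Real.sign (y (j + 1) t - k) * (A - K) = |A - K| :=
    sign_mul_eq_abs V hVmono k _
  have h2 : c * (A - K) ≤ |A - K| := sign_mul_le_abs _ _
  rw [h1]
  have : c * (1 / ℓ * (A - B)) = 1 / ℓ * (c * (A - K) - c * (B - K)) := by ring
  rw [this]
  apply mul_le_mul_of_nonneg_left (by linarith) (by positivity)
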